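/- Let C₁, C₂ > 0 be real numbers, set t = √(C₂/C₁), and let a, b, c, d ∈ ℂ satisfy ad − bc = 1 and |c| ≥ C₁. Set s = |d|² + t²·|c|². Then |b·conj(d) + a·conj(c)·t²|²/(2t²·s) + (1 − s)²/(2s) + 1 ≥ C₁·C₂/2. -/

import Mathlib

/-- The cosh-displacement estimate of Lemma 5.1, case (a): for `t = √(C₂/C₁)`,
`ad - bc = 1` and `|c| ≥ C₁`, setting `s = |d|² + t²|c|²` (which equals `|cζ+d|²` for
`ζ = t·j`), the displacement expression is at least `C₁C₂/2`. -/
theorem cosh_displacement_lower_bound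
    (C₁ C₂ : ℝ) (hC₁ : 0 < C₁) (hC₂ : 0 < C₂)
    (t : ℝ) (ht : t = Real.sqrt (C₂ / C₁))
    (a b c d : ℂ) (hdet : a * d - b * c = 1)
    (hc : C₁ ≤ ‖c‖)
    (s : ℝ) (hs : s = ‖d‖ ^ 2 + t ^ 2 * ‖c‖ ^ 2) :
    C₁ * C₂ / 2 ≤
      ‖b * (starRingEnd ℂ) d + a * (starRingEnd ℂ) c * (t : ℂ) ^ 2‖ ^ 2 /
          (2 * t ^ 2 * s) +
        (1 - s) ^ 2 / (2 * s) + 1 := by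
  have ht2 : t ^ 2 = C₂ / C₁ := by
    rw [ht, Real.sq_sqrt (le_of_lt (div_pos hC₂ hC₁))]
  have ht2pos : 0 < t ^ 2 := ht2 ▸ div_pos hC₂ hC₁
  have hcpos : 0 < ‖c‖ := lt_of_lt_of_le hC₁ hc
  have hspos : 0 < s := by
    rw [hs]
    positivity
  -- key identity
  have h1 : (a * d - b * c).re = 1 := by rw [hdet]; simp
  have h2 : (a * d - b * c).im = 0 := by rw [hdet]; simp
  have key : ‖b * (starRingEnd ℂ) d + a * (starRingEnd ℂ) c * (t : ℂ) ^ 2‖ ^ 2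
      = (‖b‖ ^ 2 + t ^ 2 * ‖a‖ ^ 2) * s - t ^ 2 := by
    rw [hs]
    rw [Complex.sq_norm, Complex.sq_norm, Complex.sq_norm, Complex.sq_norm, Complex.sq_norm]
    simp only [Complex.normSq_apply, Complex.mul_re, Complex.mul_im, Complex.add_re,
      Complex.add_im, Complex.sub_re, Complex.sub_im, Complex.conj_re, Complex.conj_im,
      Complex.ofReal_re, Complex.ofReal_im, Complex.one_re, Complex.one_im,
      pow_two] at h1 h2 ⊢
    linear_combination (-(t * t) * ((a.re * d.re - a.im * d.im - (b.re * c.re - b.im * c.im)) + 1)) * h1 +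
      (-(t * t) * (a.re * d.im + a.im * d.re - (b.re * c.im + b.im * c.re))) * h2
  rw [key]
  have hrw : ((‖b‖ ^ 2 + t ^ 2 * ‖a‖ ^ 2) * s - t ^ 2) / (2 * t ^ 2 * s) +
      (1 - s) ^ 2 / (2 * s) + 1
      = (‖b‖ ^ 2 + t ^ 2 * ‖a‖ ^ 2) / (2 * t ^ 2) + s / 2 := by
    have htne : t ≠ 0 := by rintro rfl; simp at ht2pos
    field_simp
    ring
  rw [hrw]
  have hC1C2 : C₁ * C₂ = t ^ 2 * C₁ ^ 2 := by
    rw [ht2]; field_simp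
  have hs2 : t ^ 2 * C₁ ^ 2 / 2 ≤ s / 2 := by
    rw [hs]
    have : C₁ ^ 2 ≤ ‖c‖ ^ 2 := by
      apply pow_le_pow_left₀ (le_of_lt hC₁) hc
    nlinarith [norm_nonneg d]
  have hpos : 0 ≤ (‖b‖ ^ 2 + t ^ 2 * ‖a‖ ^ 2) / (2 * t ^ 2) := by
    positivity
  rw [hC1C2]
  linarith
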